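/- Define the error set Ξ = {v ∈ ℝ^p : (1/2)·‖v‖ + ‖β⋆‖ ≥ ‖β⋆ + v‖}. Suppose λ ≥ ‖(2/n)·Xᵀε‖⋆, that α > 0 satisfies the restricted eigenvalue condition (1/n)·‖Xu‖₂² ≥ α·‖u‖₂² for all u ∈ Ξ, and that ψ ≥ 0 satisfies the restricted norm compatibility condition ‖u‖ ≤ ψ·‖u‖₂ for all u ∈ Ξ. Then the regularized least-squares minimizer β̂ satisfies ‖β̂ − β⋆‖ ≤ 3λψ²/α and ‖β̂ − β⋆‖₂ ≤ 3λψ/α. -/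

import Mathlib

open Metric Set

noncomputable section

/-- Euclidean space `ℝ^p`. -/
abbrev E (p : ℕ) := EuclideanSpace ℝ (Fin p)

/-- Matrix-vector multiplication, valued in Euclidean space. -/
def mulVecE {n p : ℕ} (X : Matrix (Fin n) (Fin p) ℝ) (v : E p) : E n :=
  WithLp.toLp 2 (X.mulVec v)

/-- The dual norm of a norm `N` on `ℝ^p`: `‖θ‖⋆ = sup {⟨θ, β⟩ : N β ≤ 1}`. -/
def dualOf {p : ℕ} (N : E p → ℝ) (θ : E p) : ℝ :=
  sSup ((fun β => (inner ℝ θ β : ℝ)) '' {β | N β ≤ 1})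

/-- The error set `Ξ(β⋆; ‖·‖) = {v : (1/2)‖v‖ + ‖β⋆‖ ≥ ‖β⋆ + v‖}`. -/
def errSet {p : ℕ} (N : E p → ℝ) (βstar : E p) : Set (E p) :=
  {v | (1 / 2 : ℝ) * N v + N βstar ≥ N (βstar + v)}

lemma inner_mulVecE_aux {n p : ℕ} (X : Matrix (Fin n) (Fin p) ℝ) (ε : E n) (v : E p) :
    (inner ℝ (mulVecE X.transpose ε) v : ℝ) = inner ℝ ε (mulVecE X v) := by
  simp only [mulVecE, PiLp.inner_apply, PiLp.toLp_apply, RCLike.inner_apply, conj_trivial,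
    Matrix.mulVec, dotProduct, Matrix.transpose_apply, Finset.sum_mul, Finset.mul_sum]
  rw [Finset.sum_comm]
  congr 1; ext i; congr 1; ext j; ring

lemma mulVecE_add_aux {n p : ℕ} (X : Matrix (Fin n) (Fin p) ℝ) (a b : E p) :
    mulVecE X (a + b) = mulVecE X a + mulVecE X b := by
  ext i
  simp [mulVecE, Matrix.mulVec, dotProduct, PiLp.add_apply, mul_add,
    Finset.sum_add_distrib]

lemma norm_lower_aux (p : ℕ) (N : E p → ℝ)
    (Ntriangle : ∀ x z : E p, N (x + z) ≤ N x + N z)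
    (Nsmul : ∀ (a : ℝ) (x : E p), N (a • x) = |a| * N x)
    (Ndefinite : ∀ x : E p, N x = 0 → x = 0) :
    ∃ m : ℝ, 0 < m ∧ ∀ x : E p, m * ‖x‖ ≤ N x := by
  have N0 : N 0 = 0 := by simpa using Nsmul 0 0
  have Nneg : ∀ x : E p, N (-x) = N x := by
    intro x; simpa using Nsmul (-1) x
  have Nnonneg : ∀ x : E p, 0 ≤ N x := by
    intro x
    have h := Ntriangle x (-x)
    simp [N0, Nneg] at h
    linarith
  obtain ⟨C, hC0, hC⟩ : ∃ C : ℝ, 0 ≤ C ∧ ∀ z : E p, N z ≤ C * ‖z‖ := by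
    refine ⟨∑ i : Fin p, N (EuclideanSpace.single i (1:ℝ)),
      Finset.sum_nonneg fun i _ => Nnonneg _, fun z => ?_⟩
    have hz : ∑ i : Fin p, z i • EuclideanSpace.single i (1:ℝ) = z := by
      have := (EuclideanSpace.basisFun (Fin p) ℝ).sum_repr z
      simpa [EuclideanSpace.basisFun_apply, EuclideanSpace.basisFun_repr] using this
    have hsum : ∀ (s : Finset (Fin p)) (f : Fin p → E p),
        N (∑ i ∈ s, f i) ≤ ∑ i ∈ s, N (f i) := by
      intro s f
      induction s using Finset.induction with
      | empty => simp [N0]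
      | insert a s' hi ih =>
        rw [Finset.sum_insert hi, Finset.sum_insert hi]
        exact le_trans (Ntriangle _ _) (by linarith)
    calc N z = N (∑ i : Fin p, z i • EuclideanSpace.single i (1:ℝ)) := by rw [hz]
      _ ≤ ∑ i : Fin p, N (z i • EuclideanSpace.single i (1:ℝ)) := hsum _ _
      _ ≤ ∑ i : Fin p, N (EuclideanSpace.single i (1:ℝ)) * ‖z‖ := by
          refine Finset.sum_le_sum fun i _ => ?_
          rw [Nsmul, mul_comm]
          have h1 : |z i| ≤ ‖z‖ := by
            rw [EuclideanSpace.norm_eq, ← Real.sqrt_sq_eq_abs]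
            apply Real.sqrt_le_sqrt
            have : z i ^ 2 ≤ ∑ j : Fin p, z j ^ 2 :=
              Finset.single_le_sum (f := fun j => z j ^ 2) (fun j _ => sq_nonneg _)
                (Finset.mem_univ i)
            simpa [sq_abs] using this
          exact mul_le_mul_of_nonneg_left h1 (Nnonneg _)
      _ = (∑ i : Fin p, N (EuclideanSpace.single i (1:ℝ))) * ‖z‖ := by rw [Finset.sum_mul]
  have hcont : Continuous N := by
    have hsub : ∀ x y : E p, N x - N y ≤ N (x - y) := by
      intro x y
      have h := Ntriangle y (x - y)
      simp at h
      linarith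
    have hlip : LipschitzWith (C.toNNReal) N := by
      apply LipschitzWith.of_dist_le_mul
      intro x y
      rw [Real.dist_eq, dist_eq_norm, abs_sub_le_iff]
      refine ⟨le_trans (hsub x y) ?_, le_trans (hsub y x) ?_⟩
      · rw [Real.coe_toNNReal _ hC0]; exact hC _
      · rw [Real.coe_toNNReal _ hC0, norm_sub_rev]; exact hC _
    exact hlip.continuous
  by_cases hp : p = 0
  · subst hp
    refine ⟨1, one_pos, fun x => ?_⟩
    have hx : x = 0 := Subsingleton.elim x 0
    simp [hx, N0]
  · haveI : Nonempty (Fin p) := ⟨⟨0, Nat.pos_of_ne_zero hp⟩⟩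
    have hsph : IsCompact (Metric.sphere (0 : E p) 1) := isCompact_sphere 0 1
    have hne : (Metric.sphere (0 : E p) 1).Nonempty := by
      apply NormedSpace.sphere_nonempty.mpr
      norm_num
    obtain ⟨x₀, hx₀mem, hx₀min⟩ := hsph.exists_isMinOn hne (hcont.continuousOn)
    have hx₀norm : ‖x₀‖ = 1 := by simpa using hx₀mem
    have hm : 0 < N x₀ := by
      rcases lt_or_eq_of_le (Nnonneg x₀) with h | h
      · exact h
      · exfalso
        have := Ndefinite x₀ h.symm
        rw [this] at hx₀norm
        simp at hx₀norm
    refine ⟨N x₀, hm, fun x => ?_⟩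
    by_cases hx : x = 0
    · simp [hx, N0]
    · have hnx : (0:ℝ) < ‖x‖ := norm_pos_iff.mpr hx
      have hu : (‖x‖⁻¹ • x) ∈ Metric.sphere (0 : E p) 1 := by
        simp [norm_smul, abs_of_pos (inv_pos.mpr hnx), inv_mul_cancel₀ hnx.ne']
      have h3 : N x₀ ≤ N (‖x‖⁻¹ • x) := hx₀min hu
      rw [Nsmul, abs_of_pos (inv_pos.mpr hnx)] at h3
      have := mul_le_mul_of_nonneg_right h3 hnx.le
      calc N x₀ * ‖x‖ ≤ (‖x‖⁻¹ * N x) * ‖x‖ := this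
        _ = N x := by field_simp

lemma inner_le_dualOf_aux (p : ℕ) (N : E p → ℝ)
    (Nsmul : ∀ (a : ℝ) (x : E p), N (a • x) = |a| * N x)
    (Ndefinite : ∀ x : E p, N x = 0 → x = 0)
    (m : ℝ) (hm : 0 < m) (hmN : ∀ x : E p, m * ‖x‖ ≤ N x)
    (θ v : E p) : (inner ℝ θ v : ℝ) ≤ dualOf N θ * N v := by
  have N0 : N 0 = 0 := by simpa using Nsmul 0 0
  have hbdd : BddAbove ((fun β => (inner ℝ θ β : ℝ)) '' {β | N β ≤ 1}) := by
    refine ⟨‖θ‖ * (1/m), ?_⟩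
    rintro a ⟨β, hβ, rfl⟩
    have h1 : ‖β‖ ≤ 1/m := by
      rw [le_div_iff₀ hm]
      have := hmN β
      have hβ1 : N β ≤ 1 := hβ
      linarith
    calc (inner ℝ θ β : ℝ) ≤ ‖θ‖ * ‖β‖ := real_inner_le_norm θ β
      _ ≤ ‖θ‖ * (1/m) := mul_le_mul_of_nonneg_left h1 (norm_nonneg θ)
  by_cases hNv : N v = 0
  · have hv0 : v = 0 := Ndefinite v hNv
    simp [hv0, N0]
  · have hNvpos : 0 < N v := by
      rcases lt_or_eq_of_le (le_trans (mul_nonneg hm.le (norm_nonneg v)) (hmN v)) with h | h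
      · exact h
      · exact absurd h.symm hNv
    set u : E p := (N v)⁻¹ • v with hu
    have hNu : N u = 1 := by
      rw [hu, Nsmul, abs_of_pos (inv_pos.mpr hNvpos), inv_mul_cancel₀ hNv]
    have hmem : (inner ℝ θ u : ℝ) ∈ (fun β => (inner ℝ θ β : ℝ)) '' {β | N β ≤ 1} :=
      ⟨u, le_of_eq hNu, rfl⟩
    have hle : (inner ℝ θ u : ℝ) ≤ dualOf N θ := le_csSup hbdd hmem
    have hvu : (inner ℝ θ v : ℝ) = N v * inner ℝ θ u := by
      conv_lhs => rw [show v = N v • u from (smul_inv_smul₀ hNv v).symm]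
      rw [real_inner_smul_right]
    rw [hvu, mul_comm (dualOf N θ) (N v)]
    exact mul_le_mul_of_nonneg_left hle hNvpos.le

/-- estimation error bounds for the regularized least-squares
minimizer under restricted eigenvalue and restricted norm compatibility conditions
over the error set `Ξ`. -/
theorem estimation_error (n p : ℕ) (hn : 1 ≤ n) (hp : 1 ≤ p)
    (X : Matrix (Fin n) (Fin p) ℝ) (βstar : E p) (ε : E n)
    (N : E p → ℝ)
    (Ntriangle : ∀ x z : E p, N (x + z) ≤ N x + N z)
    (Nsmul : ∀ (a : ℝ) (x : E p), N (a • x) = |a| * N x)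
    (Ndefinite : ∀ x : E p, N x = 0 → x = 0)
    (lam : ℝ) (hlam0 : 0 < lam)
    (y : E n) (hy : y = mulVecE X βstar + ε)
    (βhat : E p)
    (hmin : ∀ β : E p,
      (1 / (2 * n) : ℝ) * ‖y - mulVecE X βhat‖ ^ 2 + lam * N βhat ≤
        (1 / (2 * n) : ℝ) * ‖y - mulVecE X β‖ ^ 2 + lam * N β)
    (hlam : lam ≥ dualOf N (((2 : ℝ) / n) • mulVecE X.transpose ε))
    (alpha : ℝ) (halpha : 0 < alpha)
    (hRE : ∀ u ∈ errSet N βstar, (1 / n : ℝ) * ‖mulVecE X u‖ ^ 2 ≥ alpha * ‖u‖ ^ 2)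
    (psi : ℝ) (hpsi0 : 0 ≤ psi)
    (hcompat : ∀ u ∈ errSet N βstar, N u ≤ psi * ‖u‖) :
    N (βhat - βstar) ≤ 3 * lam * psi ^ 2 / alpha ∧
      ‖βhat - βstar‖ ≤ 3 * lam * psi / alpha := by
  have hn0 : (0:ℝ) < n := by exact_mod_cast Nat.lt_of_lt_of_le Nat.zero_lt_one hn
  have N0 : N 0 = 0 := by simpa using Nsmul 0 0
  have Nneg : ∀ x : E p, N (-x) = N x := by
    intro x; simpa using Nsmul (-1) x
  have Nnonneg : ∀ x : E p, 0 ≤ N x := by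
    intro x
    have h := Ntriangle x (-x)
    simp [N0, Nneg] at h
    linarith
  set v : E p := βhat - βstar with hv
  have hβv0 : βstar + v = βhat := by
    rw [hv, add_comm, sub_add_cancel]
  have hXhat : mulVecE X βhat = mulVecE X βstar + mulVecE X v := by
    rw [← mulVecE_add_aux, hβv0]
  have hres : y - mulVecE X βhat = ε - mulVecE X v := by
    rw [hy, hXhat]; abel
  have hres' : y - mulVecE X βstar = ε := by rw [hy]; abel
  have hb := hmin βstar
  rw [hres, hres'] at hb
  rw [norm_sub_sq_real] at hb
  set I : ℝ := inner ℝ ε (mulVecE X v) with hI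
  -- basic inequality
  have hb2 : (1/(2*(n:ℝ))) * ‖mulVecE X v‖^2 ≤ (1/(n:ℝ)) * I + lam * (N βstar - N βhat) := by
    have h1 : (1/(2*(n:ℝ))) * (‖ε‖^2 - 2*I + ‖mulVecE X v‖^2)
        = (1/(2*(n:ℝ)))*‖ε‖^2 - (1/(n:ℝ))*I + (1/(2*(n:ℝ)))*‖mulVecE X v‖^2 := by
      field_simp
    rw [h1] at hb
    linarith
  -- dual norm bound
  obtain ⟨m, hm, hmN⟩ := norm_lower_aux p N Ntriangle Nsmul Ndefinite
  have hdual : (2/(n:ℝ)) * I ≤ lam * N v := by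
    have h1 : (inner ℝ (((2:ℝ)/n) • mulVecE X.transpose ε) v : ℝ) = (2/(n:ℝ)) * I := by
      rw [real_inner_smul_left, inner_mulVecE_aux]
    have h2 := inner_le_dualOf_aux p N Nsmul Ndefinite m hm hmN
      (((2:ℝ)/n) • mulVecE X.transpose ε) v
    rw [h1] at h2
    calc (2/(n:ℝ)) * I ≤ dualOf N (((2:ℝ)/n) • mulVecE X.transpose ε) * N v := h2
      _ ≤ lam * N v := mul_le_mul_of_nonneg_right hlam (Nnonneg v)
  -- key inequality
  have key : (1/(n:ℝ)) * ‖mulVecE X v‖^2 ≤ lam * N v + 2 * lam * (N βstar - N βhat) := by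
    have h1 : (1/(n:ℝ)) * ‖mulVecE X v‖^2 = 2 * ((1/(2*(n:ℝ))) * ‖mulVecE X v‖^2) := by
      field_simp
    have h2 : (2:ℝ) * ((1/(n:ℝ)) * I) = (2/(n:ℝ)) * I := by ring
    rw [h1]
    linarith [hb2, hdual, h2]
  -- membership in the error set
  have hXvnn : (0:ℝ) ≤ (1/(n:ℝ)) * ‖mulVecE X v‖^2 := by positivity
  have hmem : v ∈ errSet N βstar := by
    show (1/2 : ℝ) * N v + N βstar ≥ N (βstar + v)
    rw [hβv0]
    have key0 : 0 ≤ lam * (N v + 2 * N βstar - 2 * N βhat) := by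
      have hring : lam * (N v + 2 * N βstar - 2 * N βhat)
          = lam * N v + 2 * lam * (N βstar - N βhat) := by ring
      linarith [key, hXvnn]
    have : lam * 0 ≤ lam * (N v + 2 * N βstar - 2 * N βhat) := by linarith
    have h4 := le_of_mul_le_mul_left this hlam0
    linarith
  -- triangle bound
  have hNstar : N βstar ≤ N βhat + N v := by
    have he : βhat + -v = βstar := by rw [hv]; abel
    have h := Ntriangle βhat (-v)
    rw [he, Nneg] at h
    exact h
  -- restricted eigenvalue
  have hre := hRE v hmem
  have hcp := hcompat v hmem
  have hchain : alpha * ‖v‖^2 ≤ 3 * lam * psi * ‖v‖ := by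
    have h1 : alpha * ‖v‖^2 ≤ lam * N v + 2 * lam * (N βstar - N βhat) := le_trans hre key
    have h2 : 2 * lam * (N βstar - N βhat) ≤ 2 * lam * N v := by
      have := mul_le_mul_of_nonneg_left (show N βstar - N βhat ≤ N v by linarith)
        (show (0:ℝ) ≤ 2 * lam by linarith)
      linarith
    have h3 : 3 * lam * N v ≤ 3 * lam * (psi * ‖v‖) := by
      have := mul_le_mul_of_nonneg_left hcp (show (0:ℝ) ≤ 3 * lam by linarith)
      linarith
    calc alpha * ‖v‖^2 ≤ 3 * lam * (psi * ‖v‖) := by linarith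
      _ = 3 * lam * psi * ‖v‖ := by ring
  have goal2 : ‖v‖ ≤ 3 * lam * psi / alpha := by
    by_cases hnv : ‖v‖ = 0
    · rw [hnv]; positivity
    · have hnvpos : 0 < ‖v‖ := lt_of_le_of_ne (norm_nonneg v) (Ne.symm hnv)
      rw [le_div_iff₀ halpha]
      have h1 : (alpha * ‖v‖) * ‖v‖ ≤ (3 * lam * psi) * ‖v‖ := by
        have : alpha * ‖v‖^2 = (alpha * ‖v‖) * ‖v‖ := by ring
        linarith [hchain]
      have h2 := le_of_mul_le_mul_right h1 hnvpos
      linarith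
  refine ⟨?_, goal2⟩
  calc N v ≤ psi * ‖v‖ := hcp
    _ ≤ psi * (3 * lam * psi / alpha) := mul_le_mul_of_nonneg_left goal2 hpsi0
    _ = 3 * lam * psi^2 / alpha := by field_simp

end
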